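/- Suppose B = βI with β > 0, D = δI with δ > 0, and A(t) is symmetric, piecewise continuous in t, with zero diagonal and off-diagonal entries satisfying 0 ≤ a_{ij}(t) < 1 for all t ≥ 0. If n² − n < δ/β, then the disease-free equilibrium of the time-varying n-intertwined SIS model is globally exponentially stable: there exist c, λ > 0 such that every solution with componentwise nonnegative initial condition satisfies ‖p(t)‖ ≤ c e^{−λt} ‖p(0)‖ for all t ≥ 0. -/

import Mathlib

open Matrix

/-- Euclidean norm of a vector in `ℝⁿ`. -/
noncomputable def eucNorm {n : ℕ} (x : Fin n → ℝ) : ℝ := Real.sqrt (∑ i, x i ^ 2)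

/-- derivative of the squared negative part -/
lemma hasDerivAt_negPartSq (x : ℝ) :
    HasDerivAt (fun y : ℝ => (min y 0) ^ 2) (2 * min x 0) x := by
  rcases lt_trichotomy x 0 with hx | hx | hx
  · have h1 : HasDerivAt (fun y : ℝ => y ^ 2) (2 * x) x := by
      simpa using (hasDerivAt_pow 2 x)
    have h2 : (fun y : ℝ => (min y 0) ^ 2) =ᶠ[nhds x] fun y : ℝ => y ^ 2 := by
      filter_upwards [Iio_mem_nhds hx] with y hy
      rw [min_eq_left (le_of_lt hy)]
    rw [min_eq_left hx.le]
    exact h1.congr_of_eventuallyEq h2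
  · subst hx
    rw [min_self, mul_zero]
    rw [hasDerivAt_iff_isLittleO]
    rw [Asymptotics.isLittleO_iff]
    intro c hc
    filter_upwards [Metric.ball_mem_nhds (0:ℝ) hc] with y hy
    simp only [Metric.mem_ball, Real.dist_eq, sub_zero] at hy
    have h1 : |min y 0| ≤ |y| := by
      rcases le_or_gt y 0 with h | h
      · rw [min_eq_left h]
      · rw [min_eq_right h.le]; simp [abs_nonneg]
    have : ‖(min y 0) ^ 2‖ ≤ c * ‖y - 0‖ := by
      simp only [sub_zero, Real.norm_eq_abs]
      calc |(min y 0) ^ 2| = |min y 0| * |min y 0| := by rw [← abs_mul]; ring_nf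
        _ ≤ |y| * |y| := mul_le_mul h1 h1 (abs_nonneg _) (abs_nonneg _)
        _ ≤ c * |y| := mul_le_mul_of_nonneg_right hy.le (abs_nonneg _)
    simpa using this
  · have h2 : (fun y : ℝ => (min y 0) ^ 2) =ᶠ[nhds x] fun _ : ℝ => (0:ℝ) := by
      filter_upwards [Ioi_mem_nhds hx] with y hy
      rw [min_eq_right (le_of_lt hy)]; norm_num
    rw [min_eq_right hx.le, mul_zero]
    exact (hasDerivAt_const x 0).congr_of_eventuallyEq h2

/-- Grönwall on an interval. -/
lemma gron_le {y g : ℝ → ℝ} {K t : ℝ} (ht : 0 ≤ t)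
    (hy : ∀ s ∈ Set.Icc 0 t, HasDerivAt y (g s) s)
    (hb : ∀ s ∈ Set.Icc 0 t, g s ≤ K * y s) :
    y t ≤ y 0 * Real.exp (K * t) := by
  set W : ℝ → ℝ := fun s => y s * Real.exp (-K * s) with hW
  have hWd : ∀ s ∈ Set.Icc 0 t,
      HasDerivAt W (g s * Real.exp (-K * s) + y s * (Real.exp (-K * s) * -K)) s := by
    intro s hs
    have he : HasDerivAt (fun s : ℝ => Real.exp (-K * s)) (Real.exp (-K * s) * -K) s := by
      simpa using (((hasDerivAt_id s).const_mul (-K)).exp)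
    exact (hy s hs).mul he
  have hanti : AntitoneOn W (Set.Icc 0 t) := by
    apply antitoneOn_of_deriv_nonpos (convex_Icc 0 t)
    · exact fun s hs => (hWd s hs).continuousAt.continuousWithinAt
    · intro s hs
      rw [interior_Icc] at hs
      exact ((hWd s (Set.Ioo_subset_Icc_self hs)).differentiableAt).differentiableWithinAt
    · intro s hs
      rw [interior_Icc] at hs
      have hs' := Set.Ioo_subset_Icc_self hs
      rw [(hWd s hs').deriv]
      have h1 : g s * Real.exp (-K * s) + y s * (Real.exp (-K * s) * -K)
          = (g s - K * y s) * Real.exp (-K * s) := by ring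
      rw [h1]
      exact mul_nonpos_of_nonpos_of_nonneg (by linarith [hb s hs']) (Real.exp_pos _).le
  have h0 : (0:ℝ) ∈ Set.Icc 0 t := ⟨le_refl 0, ht⟩
  have h1 : t ∈ Set.Icc 0 t := ⟨ht, le_refl t⟩
  have hle := hanti h0 h1 ht
  simp only [hW, mul_zero, Real.exp_zero, mul_one] at hle
  have := mul_le_mul_of_nonneg_right hle (Real.exp_pos (K * t)).le
  calc y t = y t * Real.exp (-K * t) * Real.exp (K * t) := by
        rw [mul_assoc, ← Real.exp_add]; ring_nf; rw [Real.exp_zero, mul_one]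
    _ ≤ y 0 * Real.exp (K * t) := this

/-- **A conservative eradication condition for bounded-weight dynamic graphs.**
Suppose `B = βI` with `β > 0`, `D = δI` with `δ > 0`, and `A(t)` is symmetric with zero
diagonal and off-diagonal entries `0 ≤ a_{ij}(t) < 1` for all `t ≥ 0`.  If
`n² − n < δ/β`, then the DFE of the time-varying n-intertwined SIS model is globally
exponentially stable. -/
theorem sis_frobenius_condition_GES
    {n : ℕ} (β δ : ℝ) (hβ : 0 < β) (hδ : 0 < δ)
    (A : ℝ → Matrix (Fin n) (Fin n) ℝ)
    (hsym : ∀ t, 0 ≤ t → (A t).IsSymm)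
    (hdiag : ∀ t, 0 ≤ t → ∀ i, A t i i = 0)
    (hnn : ∀ t, 0 ≤ t → ∀ i j, 0 ≤ A t i j)
    (hub : ∀ t, 0 ≤ t → ∀ i j, i ≠ j → A t i j < 1)
    (hcond : (n : ℝ) ^ 2 - (n : ℝ) < δ / β) :
    ∃ c > 0, ∃ lam > 0, ∀ p : ℝ → Fin n → ℝ,
      (∀ t, 0 ≤ t → ∀ i, HasDerivAt (fun s => p s i)
        ((1 - p t i) * β * (∑ j, A t i j * p t j) - δ * p t i) t) →
      (∀ i, 0 ≤ p 0 i) →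
      ∀ t, 0 ≤ t → eucNorm (p t) ≤ c * Real.exp (-lam * t) * eucNorm (p 0) := by
  have hβA : β * ((n:ℝ)^2 - (n:ℝ)) < δ := by
    have h := (lt_div_iff₀ hβ).mp hcond
    linarith
  have hlam : 0 < δ - β * ((n:ℝ) - 1) := by nlinarith [sq_nonneg ((n:ℝ) - 1), hβ.le]
  refine ⟨1, one_pos, δ - β * ((n:ℝ) - 1), hlam, ?_⟩
  set lam : ℝ := δ - β * ((n:ℝ) - 1) with hlamdef
  intro p hp hp0 t ht
  have hA1 : ∀ u, 0 ≤ u → ∀ i j, A u i j ≤ 1 := by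
    intro u hu i j
    rcases eq_or_ne i j with h | h
    · subst h; rw [hdiag u hu i]; norm_num
    · exact (hub u hu i j h).le
  -- Step 1: nonnegativity is preserved
  have hpos : ∀ s, 0 ≤ s → ∀ i, 0 ≤ p s i := by
    intro s hs i
    have hcont : ContinuousOn p (Set.Icc 0 s) := by
      intro u hu
      exact (continuousAt_pi.mpr fun i => (hp u hu.1 i).continuousAt).continuousWithinAt
    obtain ⟨C, hC⟩ := isCompact_Icc.exists_bound_of_continuousOn hcont
    have hC' : ∀ u ∈ Set.Icc (0:ℝ) s, ∀ i, |p u i| ≤ C := by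
      intro u hu i
      calc |p u i| = ‖p u i‖ := (Real.norm_eq_abs _).symm
        _ ≤ ‖p u‖ := norm_le_pi_norm (p u) i
        _ ≤ C := hC u hu
    have hC0 : (0:ℝ) ≤ C := le_trans (norm_nonneg _) (hC 0 ⟨le_refl 0, hs⟩)
    set m : ℝ → Fin n → ℝ := fun u i => min (p u i) 0 with hm
    set y : ℝ → ℝ := fun u => ∑ i, (m u i) ^ 2 with hy
    set g : ℝ → ℝ := fun u => ∑ i,
      2 * m u i * ((1 - p u i) * β * (∑ j, A u i j * p u j) - δ * p u i) with hg
    have hyd : ∀ u ∈ Set.Icc (0:ℝ) s, HasDerivAt y (g u) u := by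
      intro u hu
      apply HasDerivAt.fun_sum
      intro i _
      have := (hasDerivAt_negPartSq (p u i)).comp u (hp u hu.1 i)
      exact this
    set K : ℝ := 2 * β * (1 + C) * n with hK
    have hbd : ∀ u ∈ Set.Icc (0:ℝ) s, g u ≤ K * y u := by
      intro u hu
      set L : ℝ := ∑ j, |m u j| with hL
      have hLnn : 0 ≤ L := Finset.sum_nonneg fun j _ => abs_nonneg _
      have key : ∀ i,
          2 * m u i * ((1 - p u i) * β * (∑ j, A u i j * p u j) - δ * p u i)
            ≤ 2 * β * (1 + C) * (|m u i| * L) := by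
        intro i
        rcases le_or_gt (p u i) 0 with h | h
        · have hmi : m u i = p u i := min_eq_left h
          have habs : |m u i| = -(p u i) := by rw [hmi, abs_of_nonpos h]
          have hS : -L ≤ ∑ j, A u i j * p u j := by
            have : ∀ j ∈ Finset.univ, -|m u j| ≤ A u i j * p u j := by
              intro j _
              rcases le_or_gt (p u j) 0 with h' | h'
              · have hmj : m u j = p u j := min_eq_left h'
                have : (1:ℝ) * p u j ≤ A u i j * p u j :=
                  mul_le_mul_of_nonpos_right (hA1 u hu.1 i j) h'
                rw [hmj, abs_of_nonpos h']
                linarith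
              · have hmj : m u j = 0 := min_eq_right h'.le
                rw [hmj, abs_zero, neg_zero]
                exact mul_nonneg (hnn u hu.1 i j) h'.le
            calc -L = ∑ j, -|m u j| := by rw [hL, Finset.sum_neg_distrib]
              _ ≤ ∑ j, A u i j * p u j := Finset.sum_le_sum this
          have hcoeff : m u i * (1 - p u i) ≤ 0 :=
            mul_nonpos_of_nonpos_of_nonneg (hmi ▸ h) (by linarith)
          have F1 := mul_le_mul_of_nonpos_left hS hcoeff
          have F1' := mul_le_mul_of_nonneg_left F1 hβ.le
          have hCi : -(p u i) ≤ C := by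
            have := hC' u hu i
            rw [abs_of_nonpos h] at this; exact this
          have F2 : 0 ≤ β * ((-(p u i)) * L * (C + p u i)) := by
            apply mul_nonneg hβ.le
            apply mul_nonneg (mul_nonneg (by linarith) hLnn)
            linarith
          have F3 : 0 ≤ δ * (p u i) ^ 2 := mul_nonneg hδ.le (sq_nonneg _)
          rw [hmi] at F1'
          rw [habs, hmi]
          nlinarith [F1', F2, F3]
        · have hmi : m u i = 0 := min_eq_right h.le
          rw [hmi]
          simp
      have h4 : g u ≤ ∑ i, 2 * β * (1 + C) * (|m u i| * L) :=
        Finset.sum_le_sum fun i _ => key i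
      have h5 : ∑ i, 2 * β * (1 + C) * (|m u i| * L) = 2 * β * (1 + C) * (L * L) := by
        rw [← Finset.mul_sum, ← Finset.sum_mul]
      have h6 : L ^ 2 ≤ (n:ℝ) * y u := by
        have h := sq_sum_le_card_mul_sum_sq (s := Finset.univ) (f := fun j => |m u j|)
        simpa [sq_abs, hy, hL] using h
      have h7 : (0:ℝ) ≤ 2 * β * (1 + C) := by positivity
      calc g u ≤ 2 * β * (1 + C) * (L * L) := by rw [← h5]; exact h4
        _ ≤ 2 * β * (1 + C) * ((n:ℝ) * y u) := by
            apply mul_le_mul_of_nonneg_left _ h7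
            calc L * L = L ^ 2 := (sq L).symm
              _ ≤ (n:ℝ) * y u := h6
        _ = K * y u := by rw [hK]; ring
    have hgron := gron_le hs hyd hbd
    have hy0 : y 0 = 0 := by
      apply Finset.sum_eq_zero
      intro i _
      have : m 0 i = 0 := min_eq_right (hp0 i)
      rw [this]; norm_num
    rw [hy0, zero_mul] at hgron
    have hterm : (m s i) ^ 2 ≤ y s :=
      Finset.single_le_sum (f := fun j => (m s j) ^ 2) (fun j _ => sq_nonneg _)
        (Finset.mem_univ i)
    have hms : m s i = 0 := by
      have : (m s i) ^ 2 ≤ 0 := le_trans hterm hgron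
      nlinarith [sq_nonneg (m s i)]
    exact min_eq_right_iff.mp hms
  -- Step 2: Lyapunov decay
  set V : ℝ → ℝ := fun u => ∑ i, (p u i) ^ 2 with hV
  set gV : ℝ → ℝ := fun u => ∑ i,
    2 * p u i * ((1 - p u i) * β * (∑ j, A u i j * p u j) - δ * p u i) with hgV
  have hVd : ∀ u ∈ Set.Icc (0:ℝ) t, HasDerivAt V (gV u) u := by
    intro u hu
    apply HasDerivAt.fun_sum
    intro i _
    have := (hp u hu.1 i).pow 2
    exact (by simpa using this : HasDerivAt ((fun s => p s i) ^ 2)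
      (2 * p u i * ((1 - p u i) * β * (∑ j, A u i j * p u j) - δ * p u i)) u)
  have hVnn : ∀ u, 0 ≤ V u := fun u => Finset.sum_nonneg fun i _ => sq_nonneg _
  have hbV : ∀ u ∈ Set.Icc (0:ℝ) t, gV u ≤ (-(2 * lam)) * V u := by
    intro u hu
    have hu0 : 0 ≤ u := hu.1
    have hpnn : ∀ i, 0 ≤ p u i := hpos u hu0
    set T : ℝ := ∑ i, p u i with hT
    have keyV : ∀ i,
        2 * p u i * ((1 - p u i) * β * (∑ j, A u i j * p u j) - δ * p u i)
          ≤ 2 * β * (p u i * T - (p u i) ^ 2) - 2 * δ * (p u i) ^ 2 := by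
      intro i
      set S : ℝ := ∑ j, A u i j * p u j with hS
      have hSnn : 0 ≤ S := Finset.sum_nonneg fun j _ =>
        mul_nonneg (hnn u hu0 i j) (hpnn j)
      have h1 : p u i * S ≤ p u i * T - (p u i) ^ 2 := by
        calc p u i * S = ∑ j, A u i j * (p u i * p u j) := by
              rw [hS, Finset.mul_sum]; exact Finset.sum_congr rfl fun j _ => by ring
          _ = ∑ j ∈ Finset.univ.erase i, A u i j * (p u i * p u j) := by
              rw [Finset.sum_erase]
              rw [hdiag u hu0 i]; ring
          _ ≤ ∑ j ∈ Finset.univ.erase i, p u i * p u j := by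
              apply Finset.sum_le_sum
              intro j hj
              exact mul_le_of_le_one_left (mul_nonneg (hpnn i) (hpnn j)) (hA1 u hu0 i j)
          _ = p u i * T - (p u i) ^ 2 := by
              have h := Finset.add_sum_erase Finset.univ (fun j => p u i * p u j)
                (Finset.mem_univ i)
              rw [hT, Finset.mul_sum]
              nlinarith [h]
      have h2 : p u i * (1 - p u i) * S ≤ p u i * S := by
        nlinarith [mul_nonneg (sq_nonneg (p u i)) hSnn]
      have h3 := mul_le_mul_of_nonneg_left (h2.trans h1) hβ.le
      nlinarith [h3]
    have hsum : gV u ≤ ∑ i, (2 * β * (p u i * T - (p u i) ^ 2) - 2 * δ * (p u i) ^ 2) :=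
      Finset.sum_le_sum fun i _ => keyV i
    have e2 : ∑ i, (2 * β * (p u i * T - (p u i) ^ 2) - 2 * δ * (p u i) ^ 2)
        = 2 * β * (T * T - V u) - 2 * δ * V u := by
      rw [Finset.sum_sub_distrib, ← Finset.mul_sum, ← Finset.mul_sum,
        Finset.sum_sub_distrib, ← Finset.sum_mul]
    have hT2 : T ^ 2 ≤ (n:ℝ) * V u := by
      have h := sq_sum_le_card_mul_sum_sq (s := Finset.univ) (f := fun i => p u i)
      simpa [hT, hV] using h
    rw [e2] at hsum
    have F := mul_nonneg hβ.le (sub_nonneg.mpr hT2)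
    have hlamV : lam * V u = δ * V u - β * ((n:ℝ) - 1) * V u := by rw [hlamdef]; ring
    nlinarith [hsum, F, hVnn u, hlamV]
  have hgronV := gron_le ht hVd hbV
  have hV0 : 0 ≤ V 0 := hVnn 0
  have hexp : Real.exp (-(2 * lam) * t) = (Real.exp (-lam * t)) ^ 2 := by
    rw [sq, ← Real.exp_add]; ring_nf
  show Real.sqrt (∑ i, p t i ^ 2) ≤ 1 * Real.exp (-lam * t) * Real.sqrt (∑ i, p 0 i ^ 2)
  calc Real.sqrt (∑ i, p t i ^ 2) = Real.sqrt (V t) := rfl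
    _ ≤ Real.sqrt (V 0 * Real.exp (-(2 * lam) * t)) := Real.sqrt_le_sqrt hgronV
    _ = Real.sqrt (V 0) * Real.exp (-lam * t) := by
        rw [hexp, Real.sqrt_mul hV0, Real.sqrt_sq (Real.exp_pos _).le]
    _ = 1 * Real.exp (-lam * t) * Real.sqrt (∑ i, p 0 i ^ 2) := by rw [hV]; ring
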